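/- For fixed ρ̄ > 0 and γ ≥ 1, the function ρ ↦ ℓ(ρ̄, ρ) := sqrt(2(ρ̄ - ρ)(h(ρ̄) - h(ρ))/(ρ̄ + ρ)) is strictly increasing on (ρ̄, ∞) and strictly decreasing on (0, ρ̄). -/

import Mathlib

open Set

/-- Polytropic enthalpy: `h(ρ) = (ρ^(γ-1) - 1)/(γ-1)` for `γ > 1`, `log ρ` for `γ = 1`. -/
noncomputable def enthalpy (γ ρ : ℝ) : ℝ :=
  if γ = 1 then Real.log ρ else (ρ ^ (γ - 1) - 1) / (γ - 1)

/-- `ℓ(ρ₁, ρ₂) = sqrt(2(ρ₁-ρ₂)(h(ρ₁)-h(ρ₂))/(ρ₁+ρ₂))`. -/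
noncomputable def ell (γ ρ₁ ρ₂ : ℝ) : ℝ :=
  Real.sqrt (2 * (ρ₁ - ρ₂) * (enthalpy γ ρ₁ - enthalpy γ ρ₂) / (ρ₁ + ρ₂))

lemma enthalpy_hasDerivAt {γ ρ : ℝ} (hγ : 1 ≤ γ) (hρ : 0 < ρ) :
    HasDerivAt (enthalpy γ) (ρ ^ (γ - 2)) ρ := by
  rcases eq_or_lt_of_le hγ with h1 | h1
  · subst h1
    have he : enthalpy 1 = Real.log := by
      funext x; simp [enthalpy]
    rw [he, show (1:ℝ) - 2 = -1 by norm_num, Real.rpow_neg_one]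
    exact Real.hasDerivAt_log hρ.ne'
  · have hne : γ ≠ 1 := by linarith
    have he : enthalpy γ = fun x => (x ^ (γ - 1) - 1) / (γ - 1) := by
      funext x; simp [enthalpy, hne]
    rw [he]
    have h := ((Real.hasDerivAt_rpow_const (p := γ - 1) (Or.inl hρ.ne')).sub_const 1).div_const
      (γ - 1)
    rw [show γ - 1 - 1 = γ - 2 by ring, mul_div_cancel_left₀ _ (sub_ne_zero_of_ne hne)] at h
    exact h

lemma enthalpy_strictMonoOn {γ : ℝ} (hγ : 1 ≤ γ) :
    StrictMonoOn (enthalpy γ) (Ioi 0) := by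
  apply strictMonoOn_of_deriv_pos (convex_Ioi 0)
  · exact fun x hx => (enthalpy_hasDerivAt hγ hx).continuousAt.continuousWithinAt
  · intro x hx
    rw [interior_Ioi] at hx
    rw [(enthalpy_hasDerivAt hγ hx).deriv]
    exact Real.rpow_pos_of_pos hx _

/-- For fixed `ρ̄ > 0` and `γ ≥ 1`, the map `ρ ↦ ℓ(ρ̄, ρ)` is strictly increasing on
`(ρ̄, ∞)` and strictly decreasing on `(0, ρ̄)`. -/
theorem ell_strictMonoOn_Ioi_strictAntiOn_Ioo (γ ρb : ℝ) (hγ : 1 ≤ γ) (hρb : 0 < ρb) :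
    StrictMonoOn (fun ρ => ell γ ρb ρ) (Set.Ioi ρb) ∧
    StrictAntiOn (fun ρ => ell γ ρb ρ) (Set.Ioo 0 ρb) := by
  set g : ℝ → ℝ := fun ρ => 2 * (ρb - ρ) * (enthalpy γ ρb - enthalpy γ ρ) / (ρb + ρ) with hg_def
  -- derivative of g
  have key : ∀ ρ : ℝ, 0 < ρ → HasDerivAt g
      ((((-2) * (enthalpy γ ρb - enthalpy γ ρ) + 2 * (ρb - ρ) * (-(ρ ^ (γ - 2)))) * (ρb + ρ)
        - 2 * (ρb - ρ) * (enthalpy γ ρb - enthalpy γ ρ) * 1) / (ρb + ρ) ^ 2) ρ := by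
    intro ρ hρ
    have c1 : HasDerivAt (fun x : ℝ => 2 * (ρb - x)) (-2) ρ := by
      simpa using ((hasDerivAt_id ρ).const_sub ρb).const_mul 2
    have c2 : HasDerivAt (fun x : ℝ => enthalpy γ ρb - enthalpy γ x) (-(ρ ^ (γ - 2))) ρ :=
      (enthalpy_hasDerivAt hγ hρ).const_sub _
    have den : HasDerivAt (fun x : ℝ => ρb + x) 1 ρ := (hasDerivAt_id ρ).const_add ρb
    exact (c1.mul c2).div den (ne_of_gt (by linarith))
  -- sign of the derivative
  have deriv_eq : ∀ ρ : ℝ, 0 < ρ → deriv g ρ =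
      (4 * ρb * (enthalpy γ ρ - enthalpy γ ρb)
        + 2 * (ρ - ρb) * (ρ ^ (γ - 2)) * (ρb + ρ)) / (ρb + ρ) ^ 2 := by
    intro ρ hρ
    rw [(key ρ hρ).deriv]
    ring
  have cont : ∀ ρ : ℝ, 0 < ρ → ContinuousWithinAt g (Ioi 0) ρ :=
    fun ρ hρ => (key ρ hρ).continuousAt.continuousWithinAt
  -- monotonicity of g on (ρb, ∞)
  have gmono : StrictMonoOn g (Ioi ρb) := by
    apply strictMonoOn_of_deriv_pos (convex_Ioi ρb)
    · exact fun x hx => ((cont x (hρb.trans hx)).mono (fun y hy => hρb.trans hy))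
    · intro x hx
      rw [interior_Ioi] at hx
      have hx0 : 0 < x := hρb.trans hx
      rw [deriv_eq x hx0]
      apply div_pos _ (pow_pos (by linarith) 2)
      have hB : enthalpy γ ρb < enthalpy γ x :=
        enthalpy_strictMonoOn hγ (mem_Ioi.mpr hρb) (mem_Ioi.mpr hx0) hx
      have hP : 0 < x ^ (γ - 2) := Real.rpow_pos_of_pos hx0 _
      have t1 : 0 < (x - ρb) * x ^ (γ - 2) * (ρb + x) :=
        mul_pos (mul_pos (sub_pos.mpr hx) hP) (by linarith)
      nlinarith [mul_pos hρb (sub_pos.mpr hB)]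
  -- antitonicity of g on (0, ρb)
  have ganti : StrictAntiOn g (Ioo 0 ρb) := by
    apply strictAntiOn_of_deriv_neg (convex_Ioo 0 ρb)
    · exact fun x hx => (cont x hx.1).mono (fun y hy => hy.1)
    · intro x hx
      rw [interior_Ioo] at hx
      rw [deriv_eq x hx.1]
      apply div_neg_of_neg_of_pos _ (pow_pos (by linarith [hx.1]) 2)
      have hB : enthalpy γ x < enthalpy γ ρb :=
        enthalpy_strictMonoOn hγ (mem_Ioi.mpr hx.1) (mem_Ioi.mpr hρb) hx.2
      have hP : 0 < x ^ (γ - 2) := Real.rpow_pos_of_pos hx.1 _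
      have t1 : 0 < (ρb - x) * x ^ (γ - 2) * (ρb + x) :=
        mul_pos (mul_pos (sub_pos.mpr hx.2) hP) (by linarith [hx.1])
      nlinarith [mul_pos hρb (sub_pos.mpr hB)]
  have hell : ∀ ρ : ℝ, ell γ ρb ρ = Real.sqrt (g ρ) := fun ρ => rfl
  constructor
  · intro x hx y hy hxy
    simp only [hell]
    apply Real.sqrt_lt_sqrt _ (gmono hx hy hxy)
    have hx0 : 0 < x := hρb.trans hx
    have hB : enthalpy γ ρb ≤ enthalpy γ x :=
      (enthalpy_strictMonoOn hγ (mem_Ioi.mpr hρb) (mem_Ioi.mpr hx0) hx).le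
    apply div_nonneg _ (by positivity)
    have h1 : 2 * (ρb - x) ≤ 0 := by simp only [mem_Ioi] at hx; linarith
    have h2 : enthalpy γ ρb - enthalpy γ x ≤ 0 := by linarith
    nlinarith [mul_nonneg (neg_nonneg.2 h1) (neg_nonneg.2 h2)]
  · intro x hx y hy hxy
    simp only [hell]
    apply Real.sqrt_lt_sqrt _ (ganti hx hy hxy)
    have hB : enthalpy γ y ≤ enthalpy γ ρb :=
      (enthalpy_strictMonoOn hγ (mem_Ioi.mpr hy.1) (mem_Ioi.mpr hρb) hy.2).le
    apply div_nonneg _ (by linarith [hy.1])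
    have h1 : 0 ≤ 2 * (ρb - y) := by linarith [hy.2]
    have h2 : 0 ≤ enthalpy γ ρb - enthalpy γ y := by linarith
    exact mul_nonneg h1 h2
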